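/- Let Π = (Π′, Π″) be a nontrivial partition with 1 ∈ Π′, and let ℋ_1|Π = {B ∈ ℋ_1 : B splits along Π}. Then ℋ_1|Π = {H(σ) : σ ∈ Σ_r, σ(1) = 1, σ({1, …, r′}) = Π′}, and in particular |ℋ_1|Π| = (r′−1)!·r″!. -/

import Mathlib

open scoped BigOperators

attribute [local instance] Classical.propDecidable

noncomputable section

namespace Verlinde


variable {r : ℕ}

/-- The root `α^{ij} = e_i - e_j`, viewed as the linear functional `x_i - x_j`. -/
def stdRoot (r : ℕ) (i j : Fin r) : Fin r → ℝ :=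
  fun t => (if t = i then 1 else 0) - (if t = j then 1 else 0)

/-- `B ∈ 𝓑`: an ordered tuple of roots forming a linear basis of
`V* = {a : ∑ i, a i = 0}`. -/
def IsOB (r : ℕ) (B : Fin (r - 1) → Fin r → ℝ) : Prop :=
  (∀ m, ∃ i j, i ≠ j ∧ B m = stdRoot r i j) ∧
    LinearIndependent ℝ B ∧
    ∀ a : Fin r → ℝ, (∑ i, a i) = 0 → a ∈ Submodule.span ℝ (Set.range B)

/-- Coordinates of `a` with respect to the tuple `B` (junk unless such
coordinates exist; they are unique when `B` is linearly independent). -/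
def coordsOf (B : Fin (r - 1) → Fin r → ℝ) (a : Fin r → ℝ) : Fin (r - 1) → ℝ :=
  if h : ∃ c : Fin (r - 1) → ℝ, a = ∑ j, c j • B j then h.choose else 0

/-- The integer part `[a]_B ∈ Λ`. -/
def intPart (B : Fin (r - 1) → Fin r → ℝ) (a : Fin r → ℝ) : Fin r → ℝ :=
  ∑ j, (⌊coordsOf B a j⌋ : ℝ) • B j

/-- The fractional part `{a}_B`. -/
def fracPart (B : Fin (r - 1) → Fin r → ℝ) (a : Fin r → ℝ) : Fin r → ℝ :=
  a - intPart B a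

/-- `a ∈ V*` is regular if all its `B`-coordinates are non-integral, for every `B ∈ 𝓑`,
i.e. `{a}_B ∈ ∑_j (0,1)·β^{[j]}` for every `B ∈ 𝓑`. -/
def IsRegular (r : ℕ) (a : Fin r → ℝ) : Prop :=
  ∀ B, IsOB r B → ∀ j, Int.fract (coordsOf B a j) ≠ 0

/-- The flag `Fl(B)`: `Fl(B) j = span (β^{[j]}, …, β^{[r-1]})`. -/
def flagOf (B : Fin (r - 1) → Fin r → ℝ) : Fin (r - 1) → Submodule ℝ (Fin r → ℝ) :=
  fun j => Submodule.span ℝ {x | ∃ i, j ≤ i ∧ B i = x}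

/-- `B ⊣ C`. -/
def Dashv (B C : Fin (r - 1) → Fin r → ℝ) : Prop :=
  ∀ τ : Equiv.Perm (Fin (r - 1)), flagOf (B ∘ τ) ≠ flagOf C

/-- A diagonal basis: a subset of `𝓑` of cardinality `(r-1)!` any two distinct
members of which satisfy `B ⊣ C`. -/
def IsDiagonalBasis (r : ℕ) (D : Finset (Fin (r - 1) → Fin r → ℝ)) : Prop :=
  D.card = (r - 1).factorial ∧ (∀ B ∈ D, IsOB r B) ∧
    ∀ B ∈ D, ∀ C ∈ D, B ≠ C → Dashv B C

/-- The index of the last coordinate (`r` in `1`-indexed notation). -/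
def lastI (r : ℕ) (h : 0 < r) : Fin r := ⟨r - 1, by omega⟩

/-- `ρ = ((r-1)/2, (r-3)/2, …, (1-r)/2)`. -/
def rho (r : ℕ) : Fin r → ℝ := fun i => ((r : ℝ) - 1) / 2 - (i : ℝ)

/-- `σ · a`, where `(σ·a)_i = a_{σ⁻¹ i}`. -/
def permVec (σ : Equiv.Perm (Fin r)) (a : Fin r → ℝ) : Fin r → ℝ := fun i => a (σ⁻¹ i)

/-- A nontrivial (ordered) partition `Π = (Π′, Π″)`, encoded by `Π′ = P`:
both parts nonempty and `r ∈ Π″`. -/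
def NontrivPart (r : ℕ) (h : 0 < r) (P : Finset (Fin r)) : Prop :=
  P.Nonempty ∧ lastI r h ∉ P

/-- The wall `S_{Π,l} ⊆ V*`. -/
def wallSet (r : ℕ) (P : Finset (Fin r)) (l : ℤ) : Set (Fin r → ℝ) :=
  {c | (∑ i, c i) = 0 ∧ (∑ i ∈ P, c i) = (l : ℝ)}

/-- The simplex `Δ` of admissible parabolic weights. -/
def DeltaSet (r : ℕ) (h : 0 < r) : Set (Fin r → ℝ) :=
  {c | (∑ i, c i) = 0 ∧ (∀ i j : Fin r, i < j → c j < c i) ∧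
    c ⟨0, h⟩ - c (lastI r h) < 1}

/-- The chamber of a (regular) point `c ∈ V*`. -/
def chamberOf (r : ℕ) (c : Fin r → ℝ) : Set (Fin r → ℝ) :=
  {b | (∑ i, b i) = 0 ∧ IsRegular r b ∧ ∀ B, IsOB r B → intPart B b = intPart B c}

/-- `{i,j}` is an edge of `Tree(B)`. -/
def IsTreeEdge (B : Fin (r - 1) → Fin r → ℝ) (i j : Fin r) : Prop :=
  ∃ m, B m = stdRoot r i j ∨ B m = stdRoot r j i

/-- `B` splits along the partition `Π` (with `Π′ = P`): exactly one edge of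
`Tree(B)` joins `Π′` and `Π″`. -/
def SplitsAlong (B : Fin (r - 1) → Fin r → ℝ) (P : Finset (Fin r)) : Prop :=
  ∃! pr : Fin r × Fin r, pr.1 ∈ P ∧ pr.2 ∉ P ∧ IsTreeEdge B pr.1 pr.2

/-- The linking root `β_link = α^{pq}` with `p ∈ Π′`, `q ∈ Π″`. -/
def betaLink (B : Fin (r - 1) → Fin r → ℝ) (P : Finset (Fin r)) : Fin r → ℝ :=
  if h : ∃ pr : Fin r × Fin r, pr.1 ∈ P ∧ pr.2 ∉ P ∧ IsTreeEdge B pr.1 pr.2 then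
    stdRoot r h.choose.1 h.choose.2
  else 0


/-- The Hamiltonian ordered basis `H(σ) = (α^{σ(r−1),σ(r)}, …, α^{σ(1),σ(2)})`
(indices written `0`-based). -/
def ham (r : ℕ) (σ : Equiv.Perm (Fin r)) : Fin (r - 1) → Fin r → ℝ :=
  fun j => stdRoot r (σ ⟨r - 2 - (j : ℕ), by have := j.isLt; omega⟩)
    (σ ⟨r - 1 - (j : ℕ), by have := j.isLt; omega⟩)

/-- `ℋ_m = {H(σ) : σ(1) = m}`. -/
def hamSet (r : ℕ) (h : 0 < r) (m : Fin r) : Finset (Fin (r - 1) → Fin r → ℝ) :=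
  (Finset.univ.filter fun σ : Equiv.Perm (Fin r) => σ ⟨0, h⟩ = m).image (ham r)


/-! ### Auxiliary lemmas -/

lemma stdRoot_inj {r : ℕ} {i j k l : Fin r} (hij : i ≠ j) (hkl : k ≠ l)
    (h : stdRoot r i j = stdRoot r k l) : i = k ∧ j = l := by
  have hi := congrFun h i
  have hj := congrFun h j
  simp only [stdRoot] at hi hj
  constructor
  · by_contra hc
    split_ifs at hi <;> first | exact hc ‹i = k› | exact hij ‹i = j› | norm_num at hi
  · by_contra hc
    split_ifs at hj <;> first | exact hc ‹j = l› | exact hij (‹j = i›.symm) | norm_num at hj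

lemma stdRoot_inj' {r : ℕ} {a b i j : Fin r} (hab : a ≠ b)
    (h : stdRoot r a b = stdRoot r i j) : a = i ∧ b = j := by
  have hij : i ≠ j := by
    rintro rfl
    have := congrFun h a
    simp [stdRoot, hab] at this
  exact stdRoot_inj hab hij h

set_option maxHeartbeats 1000000 in
lemma isTreeEdge_ham_iff {r : ℕ} (hr : 2 ≤ r) (σ : Equiv.Perm (Fin r)) (i j : Fin r) :
    IsTreeEdge (ham r σ) i j ↔ ∃ k : ℕ, ∃ hk : k + 1 ≤ r - 1,
      (σ ⟨k, by omega⟩ = i ∧ σ ⟨k + 1, by omega⟩ = j) ∨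
      (σ ⟨k, by omega⟩ = j ∧ σ ⟨k + 1, by omega⟩ = i) := by
  constructor
  · rintro ⟨m, hm⟩
    have hmlt := m.isLt
    refine ⟨r - 2 - (m : ℕ), by omega, ?_⟩
    have hidx : (⟨r - 1 - (m : ℕ), by omega⟩ : Fin r) = ⟨r - 2 - (m : ℕ) + 1, by omega⟩ :=
      Fin.ext (by simp only [Fin.val_mk]; omega)
    have hab : σ ⟨r - 2 - (m : ℕ), by omega⟩ ≠ σ ⟨r - 1 - (m : ℕ), by omega⟩ := by
      intro h
      have := σ.injective h
      rw [Fin.mk.injEq] at this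
      omega
    rcases hm with h | h
    · obtain ⟨h1, h2⟩ := stdRoot_inj' hab h
      exact Or.inl ⟨h1, by rw [← hidx]; exact h2⟩
    · obtain ⟨h1, h2⟩ := stdRoot_inj' hab h
      exact Or.inr ⟨h1, by rw [← hidx]; exact h2⟩
  · rintro ⟨k, hk, hor⟩
    refine ⟨⟨r - 2 - k, by omega⟩, ?_⟩
    have e1 : (⟨r - 2 - ((⟨r - 2 - k, by omega⟩ : Fin (r - 1)) : ℕ), by omega⟩ : Fin r) = ⟨k, by omega⟩ :=
      Fin.ext (by simp only [Fin.val_mk]; omega)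
    have e2 : (⟨r - 1 - ((⟨r - 2 - k, by omega⟩ : Fin (r - 1)) : ℕ), by omega⟩ : Fin r) = ⟨k + 1, by omega⟩ :=
      Fin.ext (by simp only [Fin.val_mk]; omega)
    rcases hor with ⟨h1, h2⟩ | ⟨h1, h2⟩
    · left
      subst h1; subst h2
      show stdRoot r _ _ = stdRoot r _ _
      rw [e1, e2]
    · right
      subst h1; subst h2
      show stdRoot r _ _ = stdRoot r _ _
      rw [e1, e2]

lemma ham_injective {r : ℕ} (hr : 2 ≤ r) : Function.Injective (ham r) := by
  intro σ τ h
  ext x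
  · have hxlt := x.isLt
    by_cases hx : (x : ℕ) = 0
    · have hj : (r : ℕ) - 2 < r - 1 := by omega
      have := congrFun h ⟨r - 2, hj⟩
      simp only [ham] at this
      have hab : σ ⟨r - 2 - (r - 2), by omega⟩ ≠ σ ⟨r - 1 - (r - 2), by omega⟩ := by
        intro hh
        have := σ.injective hh
        rw [Fin.mk.injEq] at this
        omega
      have h1 := (stdRoot_inj' hab this).1
      have ex : (⟨r - 2 - (r - 2), by omega⟩ : Fin r) = x := Fin.ext (by simp only [Fin.val_mk]; omega)
      rw [ex] at h1
      exact congrArg Fin.val h1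
    · have hj : (r : ℕ) - 1 - (x : ℕ) < r - 1 := by omega
      have := congrFun h ⟨r - 1 - (x : ℕ), hj⟩
      simp only [ham] at this
      have hab : σ ⟨r - 2 - (r - 1 - (x : ℕ)), by omega⟩ ≠ σ ⟨r - 1 - (r - 1 - (x : ℕ)), by omega⟩ := by
        intro hh
        have := σ.injective hh
        rw [Fin.mk.injEq] at this
        omega
      have h2 := (stdRoot_inj' hab this).2
      have ex : (⟨r - 1 - (r - 1 - (x : ℕ)), by omega⟩ : Fin r) = x := Fin.ext (by simp only [Fin.val_mk]; omega)
      rw [ex] at h2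
      exact congrArg Fin.val h2

lemma splits_iff (hr : 2 ≤ r) (P : Finset (Fin r))
    (h0 : (⟨0, Nat.lt_of_lt_of_le Nat.zero_lt_two hr⟩ : Fin r) ∈ P) (hlast : lastI r (Nat.lt_of_lt_of_le Nat.zero_lt_two hr) ∉ P)
    (σ : Equiv.Perm (Fin r)) (hσ0 : σ ⟨0, Nat.lt_of_lt_of_le Nat.zero_lt_two hr⟩ = ⟨0, Nat.lt_of_lt_of_le Nat.zero_lt_two hr⟩) :
    SplitsAlong (ham r σ) P ↔
      (Finset.univ.filter fun i : Fin r => (i : ℕ) < P.card).image σ = P := by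
  have hc1 : 1 ≤ P.card := Finset.card_pos.mpr ⟨_, h0⟩
  have hclt : P.card < r := by
    have hne : P ≠ Finset.univ := fun h => hlast (by rw [h]; exact Finset.mem_univ _)
    have h := Finset.card_lt_card ((Finset.ssubset_univ_iff).mpr hne)
    simpa using h
  constructor
  · rintro ⟨pr, hpr, huniq⟩
    -- no ascent
    have noasc : ∀ k : ℕ, ∀ hk : k + 1 ≤ r - 1,
        σ ⟨k + 1, by omega⟩ ∈ P → σ ⟨k, by omega⟩ ∈ P := by
      intro k hk hk1
      by_contra hk0
      -- find a descent by induction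
      have hdesc : ∀ n : ℕ, ∀ hn : n ≤ r - 1, σ ⟨n, by omega⟩ ∉ P →
          ∃ m : ℕ, ∃ hm : m + 1 ≤ r - 1, σ ⟨m, by omega⟩ ∈ P ∧ σ ⟨m + 1, by omega⟩ ∉ P := by
        intro n
        induction n with
        | zero =>
          intro hn h
          exact absurd (show σ ⟨0, Nat.lt_of_lt_of_le Nat.zero_lt_two hr⟩ ∈ P by rw [hσ0]; exact h0) h
        | succ m ih =>
          intro hn h
          by_cases hm : σ ⟨m, by omega⟩ ∈ P
          · exact ⟨m, by omega, hm, h⟩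
          · exact ih (by omega) hm
      obtain ⟨m, hm, hmP, hm1P⟩ := hdesc k (by omega) hk0
      have hA : (σ ⟨k + 1, by omega⟩, σ ⟨k, by omega⟩) = pr := by
        apply huniq
        exact ⟨hk1, hk0, (isTreeEdge_ham_iff hr σ _ _).mpr ⟨k, hk, Or.inr ⟨rfl, rfl⟩⟩⟩
      have hD : (σ ⟨m, by omega⟩, σ ⟨m + 1, by omega⟩) = pr := by
        apply huniq
        exact ⟨hmP, hm1P, (isTreeEdge_ham_iff hr σ _ _).mpr ⟨m, hm, Or.inl ⟨rfl, rfl⟩⟩⟩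
      have hAD := hA.trans hD.symm
      have h1 : σ ⟨k + 1, by omega⟩ = σ ⟨m, by omega⟩ := congrArg Prod.fst hAD
      have h2 : σ ⟨k, by omega⟩ = σ ⟨m + 1, by omega⟩ := congrArg Prod.snd hAD
      have e1 := σ.injective h1
      have e2 := σ.injective h2
      rw [Fin.mk.injEq] at e1 e2
      omega
    -- monotone downward
    have mono : ∀ d k : ℕ, ∀ hk : k + d ≤ r - 1, σ ⟨k + d, by omega⟩ ∈ P →
        σ ⟨k, by omega⟩ ∈ P := by
      intro d
      induction d with
      | zero => intro k hk h; exact h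
      | succ d ih =>
        intro k hk h
        have : σ ⟨k + d, by omega⟩ ∈ P := noasc (k + d) (by omega) h
        exact ih k (by omega) this
    have Kchar : ∀ x : Fin r, σ x ∈ P ↔ (x : ℕ) < P.card := by
      have hKcard : (Finset.univ.filter fun x : Fin r => σ x ∈ P).card = P.card := by
        have himg : (Finset.univ.filter fun x : Fin r => σ x ∈ P).image σ = P := by
          ext y
          simp only [Finset.mem_image, Finset.mem_filter, Finset.mem_univ, true_and]
          constructor
          · rintro ⟨x, hx, rfl⟩; exact hx
          · intro hy; exact ⟨σ.symm y, by simpa using hy, by simp⟩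
        have h2 := Finset.card_image_of_injective (Finset.univ.filter fun x : Fin r => σ x ∈ P) σ.injective
        rw [himg] at h2
        exact h2.symm
      intro x
      constructor
      · intro hx
        by_contra hlt
        push_neg at hlt
        -- Iic x ⊆ K
        have hsub : Finset.Iic x ⊆ Finset.univ.filter fun y : Fin r => σ y ∈ P := by
          intro m hm
          rw [Finset.mem_Iic] at hm
          have hmx : (m : ℕ) ≤ (x : ℕ) := hm
          have hx' : (x : ℕ) < r := x.isLt
          have := mono ((x : ℕ) - (m : ℕ)) (m : ℕ) (by omega)
          simp only [Finset.mem_filter, Finset.mem_univ, true_and]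
          have ex : (⟨(m : ℕ) + ((x : ℕ) - (m : ℕ)), by omega⟩ : Fin r) = x := Fin.ext (by simp only [Fin.val_mk]; omega)
          have em : (⟨(m : ℕ), by omega⟩ : Fin r) = m := Fin.ext rfl
          rw [ex, em] at this
          exact this hx
        have := Finset.card_le_card hsub
        rw [hKcard, Fin.card_Iic] at this
        omega
      · intro hx
        by_contra hxP
        -- K ⊆ Iio x
        have hsub : (Finset.univ.filter fun y : Fin r => σ y ∈ P) ⊆ Finset.Iio x := by
          intro m hm
          simp only [Finset.mem_filter, Finset.mem_univ, true_and] at hm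
          rw [Finset.mem_Iio]
          by_contra hge
          push_neg at hge
          have hge' : (x : ℕ) ≤ (m : ℕ) := hge
          have hm' : (m : ℕ) < r := m.isLt
          have := mono ((m : ℕ) - (x : ℕ)) (x : ℕ) (by omega)
          have ex : (⟨(x : ℕ) + ((m : ℕ) - (x : ℕ)), by omega⟩ : Fin r) = m := Fin.ext (by simp only [Fin.val_mk]; omega)
          have em : (⟨(x : ℕ), by omega⟩ : Fin r) = x := Fin.ext rfl
          rw [ex, em] at this
          exact hxP (this hm)
        have := Finset.card_le_card hsub
        rw [hKcard, Fin.card_Iio] at this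
        omega
    ext y
    simp only [Finset.mem_image, Finset.mem_filter, Finset.mem_univ, true_and]
    constructor
    · rintro ⟨x, hx, rfl⟩; exact (Kchar x).mpr hx
    · intro hy
      exact ⟨σ.symm y, by rw [← Kchar]; simpa using hy, by simp⟩
  · intro himg
    have hmem : ∀ x : Fin r, σ x ∈ P ↔ (x : ℕ) < P.card := by
      intro x
      constructor
      · intro hx
        rw [← himg] at hx
        obtain ⟨y, hy, he⟩ := Finset.mem_image.mp hx
        have := σ.injective he
        subst this
        simpa using (Finset.mem_filter.mp hy).2
      · intro hx
        rw [← himg]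
        exact Finset.mem_image_of_mem σ (Finset.mem_filter.mpr ⟨Finset.mem_univ _, hx⟩)
    refine ⟨(σ ⟨P.card - 1, by omega⟩, σ ⟨P.card - 1 + 1, by omega⟩), ⟨?_, ?_, ?_⟩, ?_⟩
    · exact (hmem _).mpr (by simp only [Fin.val_mk]; omega)
    · rw [hmem]; simp only [Fin.val_mk]; omega
    · exact (isTreeEdge_ham_iff hr σ _ _).mpr ⟨P.card - 1, by omega, Or.inl ⟨rfl, rfl⟩⟩
    · rintro ⟨p, q⟩ ⟨hp, hq, hedge⟩
      rw [isTreeEdge_ham_iff hr] at hedge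
      obtain ⟨k, hk, hor⟩ := hedge
      rcases hor with ⟨h1, h2⟩ | ⟨h1, h2⟩
      · have hkP : (k : ℕ) < P.card := by
          have := (hmem _).mp (h1 ▸ hp); simpa using this
        have hk1P : ¬ (k + 1 < P.card) := by
          intro hcon
          exact hq ((h2 ▸ (hmem _).mpr (by simp only [Fin.val_mk]; exact hcon)))
        have hkeq : k = P.card - 1 := by omega
        subst hkeq
        simp only [Prod.mk.injEq]
        exact ⟨h1.symm, h2.symm⟩
      · exfalso
        have hk1P : k + 1 < P.card := by
          have := (hmem _).mp (h2 ▸ hp); simpa using this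
        have hkP : ¬ ((k : ℕ) < P.card) := by
          intro hcon
          exact hq (h1 ▸ (hmem _).mpr (by simpa using hcon))
        omega

/-- Glue a bijection `seg \ {z} ≃ P \ {z}` and a bijection `segᶜ ≃ Pᶜ` into a
function fixing `z`. -/
def glueFun (z : Fin r) (seg P : Finset (Fin r))
    (e1 : {x : Fin r // x ∈ seg ∧ x ≠ z} ≃ {y : Fin r // y ∈ P ∧ y ≠ z})
    (e2 : {x : Fin r // x ∉ seg} ≃ {y : Fin r // y ∉ P}) : Fin r → Fin r :=
  fun x => if h : x ∈ seg then (if hxz : x = z then z else (e1 ⟨x, h, hxz⟩ : Fin r))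
    else (e2 ⟨x, h⟩ : Fin r)

lemma glueFun_inj (z : Fin r) (seg P : Finset (Fin r)) (h0 : z ∈ P)
    (e1 : {x : Fin r // x ∈ seg ∧ x ≠ z} ≃ {y : Fin r // y ∈ P ∧ y ≠ z})
    (e2 : {x : Fin r // x ∉ seg} ≃ {y : Fin r // y ∉ P}) :
    Function.Injective (glueFun z seg P e1 e2) := by
  intro a b hab
  unfold glueFun at hab
  by_cases ha : a ∈ seg <;> by_cases hb : b ∈ seg
  · rw [dif_pos ha, dif_pos hb] at hab
    by_cases haz : a = z <;> by_cases hbz : b = z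
    · rw [haz, hbz]
    · rw [dif_pos haz, dif_neg hbz] at hab
      exact absurd hab.symm (e1 ⟨b, hb, hbz⟩).2.2
    · rw [dif_neg haz, dif_pos hbz] at hab
      exact absurd hab (e1 ⟨a, ha, haz⟩).2.2
    · rw [dif_neg haz, dif_neg hbz] at hab
      have h2 : (⟨a, ha, haz⟩ : {x : Fin r // x ∈ seg ∧ x ≠ z}) = ⟨b, hb, hbz⟩ :=
        e1.injective (Subtype.ext hab)
      exact congrArg Subtype.val h2
  · rw [dif_pos ha, dif_neg hb] at hab
    by_cases haz : a = z
    · rw [dif_pos haz] at hab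
      exact absurd (hab ▸ h0) (e2 ⟨b, hb⟩).2
    · rw [dif_neg haz] at hab
      exact absurd (hab ▸ (e1 ⟨a, ha, haz⟩).2.1) (e2 ⟨b, hb⟩).2
  · rw [dif_neg ha, dif_pos hb] at hab
    by_cases hbz : b = z
    · rw [dif_pos hbz] at hab
      exact absurd (hab ▸ h0) (e2 ⟨a, ha⟩).2
    · rw [dif_neg hbz] at hab
      exact absurd (hab ▸ (e1 ⟨b, hb, hbz⟩).2.1) (e2 ⟨a, ha⟩).2
  · rw [dif_neg ha, dif_neg hb] at hab
    exact congrArg Subtype.val (e2.injective (Subtype.ext hab))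

lemma glueFun_fix (z : Fin r) (seg P : Finset (Fin r)) (hzseg : z ∈ seg)
    (e1 : {x : Fin r // x ∈ seg ∧ x ≠ z} ≃ {y : Fin r // y ∈ P ∧ y ≠ z})
    (e2 : {x : Fin r // x ∉ seg} ≃ {y : Fin r // y ∉ P}) :
    glueFun z seg P e1 e2 z = z := by
  unfold glueFun
  rw [dif_pos hzseg, dif_pos rfl]

lemma glueFun_image (z : Fin r) (seg P : Finset (Fin r)) (hzseg : z ∈ seg) (h0 : z ∈ P)
    (e1 : {x : Fin r // x ∈ seg ∧ x ≠ z} ≃ {y : Fin r // y ∈ P ∧ y ≠ z})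
    (e2 : {x : Fin r // x ∉ seg} ≃ {y : Fin r // y ∉ P}) (y : Fin r) :
    (∃ x ∈ seg, glueFun z seg P e1 e2 x = y) ↔ y ∈ P := by
  constructor
  · rintro ⟨x, hx, rfl⟩
    show (if h : x ∈ seg then _ else _) ∈ P
    rw [dif_pos hx]
    by_cases hxz : x = z
    · rw [dif_pos hxz]; exact h0
    · rw [dif_neg hxz]; exact (e1 ⟨x, hx, hxz⟩).2.1
  · intro hy
    by_cases hyz : y = z
    · exact ⟨z, hzseg, by rw [glueFun_fix z seg P hzseg e1 e2, hyz]⟩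
    · set u := e1.symm ⟨y, hy, hyz⟩ with hu
      refine ⟨u.1, u.2.1, ?_⟩
      show (if h : (u : Fin r) ∈ seg then _ else _) = y
      rw [dif_pos u.2.1, dif_neg u.2.2]
      have h2 : (⟨(u : Fin r), u.2.1, u.2.2⟩ : {x : Fin r // x ∈ seg ∧ x ≠ z}) = u :=
        Subtype.ext rfl
      rw [h2, hu, Equiv.apply_symm_apply]

lemma count_perms (hr : 2 ≤ r) (P : Finset (Fin r))
    (h0 : (⟨0, Nat.lt_of_lt_of_le Nat.zero_lt_two hr⟩ : Fin r) ∈ P) (hc1 : 1 ≤ P.card) (hclt : P.card < r) :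
    (Finset.univ.filter fun σ : Equiv.Perm (Fin r) =>
        σ ⟨0, Nat.lt_of_lt_of_le Nat.zero_lt_two hr⟩ = (⟨0, Nat.lt_of_lt_of_le Nat.zero_lt_two hr⟩ : Fin r) ∧
          (Finset.univ.filter fun i : Fin r => (i : ℕ) < P.card).image σ = P).card =
      (P.card - 1).factorial * (r - P.card).factorial := by
  set z : Fin r := ⟨0, Nat.lt_of_lt_of_le Nat.zero_lt_two hr⟩ with hz
  set seg : Finset (Fin r) := Finset.univ.filter fun i : Fin r => (i : ℕ) < P.card with hseg
  have hzseg : z ∈ seg := by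
    simp only [hseg, Finset.mem_filter, Finset.mem_univ, true_and]
    exact hc1
  have hsegcard : seg.card = P.card := by
    have h : seg = Finset.Iio (⟨P.card, hclt⟩ : Fin r) := by
      ext x
      simp only [hseg, Finset.mem_filter, Finset.mem_univ, true_and, Finset.mem_Iio]
      exact ⟨fun h => h, fun h => h⟩
    rw [h, Fin.card_Iio]
  have cardA : Fintype.card {x : Fin r // x ∈ seg ∧ x ≠ z} = P.card - 1 := by
    rw [Fintype.card_subtype]
    have h : (Finset.univ.filter fun x : Fin r => x ∈ seg ∧ x ≠ z) = seg.erase z := by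
      ext x
      simp only [Finset.mem_filter, Finset.mem_univ, true_and, Finset.mem_erase]
      tauto
    rw [h, Finset.card_erase_of_mem hzseg, hsegcard]
  have cardA' : Fintype.card {y : Fin r // y ∈ P ∧ y ≠ z} = P.card - 1 := by
    rw [Fintype.card_subtype]
    have h : (Finset.univ.filter fun y : Fin r => y ∈ P ∧ y ≠ z) = P.erase z := by
      ext x
      simp only [Finset.mem_filter, Finset.mem_univ, true_and, Finset.mem_erase]
      tauto
    rw [h, Finset.card_erase_of_mem h0]
  have cardB : Fintype.card {x : Fin r // x ∉ seg} = r - P.card := by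
    rw [Fintype.card_subtype]
    have h : (Finset.univ.filter fun x : Fin r => x ∉ seg) = segᶜ := by
      ext x; simp [Finset.mem_compl]
    rw [h, Finset.card_compl, hsegcard, Fintype.card_fin]
  have cardB' : Fintype.card {y : Fin r // y ∉ P} = r - P.card := by
    rw [Fintype.card_subtype]
    have h : (Finset.univ.filter fun y : Fin r => y ∉ P) = Pᶜ := by
      ext x; simp [Finset.mem_compl]
    rw [h, Finset.card_compl, Fintype.card_fin]
  have key : Fintype.card {σ : Equiv.Perm (Fin r) //
      σ z = z ∧ seg.image σ = P} =
      Fintype.card (({x : Fin r // x ∈ seg ∧ x ≠ z} ≃ {y : Fin r // y ∈ P ∧ y ≠ z}) ×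
        ({x : Fin r // x ∉ seg} ≃ {y : Fin r // y ∉ P})) := by
    have hbij : Function.Bijective (fun p :
        (({x : Fin r // x ∈ seg ∧ x ≠ z} ≃ {y : Fin r // y ∈ P ∧ y ≠ z}) ×
          ({x : Fin r // x ∉ seg} ≃ {y : Fin r // y ∉ P})) =>
        (⟨Equiv.ofBijective (glueFun z seg P p.1 p.2)
            (Finite.injective_iff_bijective.mp (glueFun_inj z seg P h0 p.1 p.2)),
          glueFun_fix z seg P hzseg p.1 p.2, by
            ext y
            rw [Finset.mem_image]
            exact glueFun_image z seg P hzseg h0 p.1 p.2 y⟩ :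
          {σ : Equiv.Perm (Fin r) // σ z = z ∧ seg.image σ = P})) := by
      constructor
      · intro p q hpq
        have hfun : ∀ x : Fin r, glueFun z seg P p.1 p.2 x = glueFun z seg P q.1 q.2 x := by
          intro x
          have := congrArg Subtype.val hpq
          exact Equiv.ext_iff.mp this x
        refine Prod.ext ?_ ?_
        · apply Equiv.ext
          intro u
          have hx := hfun u.1
          unfold glueFun at hx
          rw [dif_pos u.2.1, dif_neg u.2.2, dif_pos u.2.1, dif_neg u.2.2] at hx
          have h2 : (⟨u.1, u.2.1, u.2.2⟩ : {x : Fin r // x ∈ seg ∧ x ≠ z}) = u :=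
            Subtype.ext rfl
          rw [h2] at hx
          exact Subtype.ext hx
        · apply Equiv.ext
          intro u
          have hx := hfun u.1
          unfold glueFun at hx
          rw [dif_neg u.2, dif_neg u.2] at hx
          have h2 : (⟨u.1, u.2⟩ : {x : Fin r // x ∉ seg}) = u := Subtype.ext rfl
          rw [h2] at hx
          exact Subtype.ext hx
      · rintro ⟨σ, hσz, hσimg⟩
        have hmem1 : ∀ u : {x : Fin r // x ∈ seg ∧ x ≠ z}, σ u.1 ∈ P ∧ σ u.1 ≠ z := by
          intro u
          constructor
          · rw [← hσimg]; exact Finset.mem_image_of_mem σ u.2.1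
          · intro h
            exact u.2.2 (σ.injective (h.trans hσz.symm))
        have hmem2 : ∀ u : {x : Fin r // x ∉ seg}, σ u.1 ∉ P := by
          intro u hmem
          rw [← hσimg] at hmem
          obtain ⟨x', hx', he⟩ := Finset.mem_image.mp hmem
          exact u.2 (σ.injective he ▸ hx')
        set g1 : {x : Fin r // x ∈ seg ∧ x ≠ z} → {y : Fin r // y ∈ P ∧ y ≠ z} :=
          fun u => ⟨σ u.1, hmem1 u⟩ with hg1
        set g2 : {x : Fin r // x ∉ seg} → {y : Fin r // y ∉ P} :=
          fun u => ⟨σ u.1, hmem2 u⟩ with hg2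
        have hg1inj : Function.Injective g1 := by
          intro a b hab
          exact Subtype.ext (σ.injective (congrArg Subtype.val hab))
        have hg2inj : Function.Injective g2 := by
          intro a b hab
          exact Subtype.ext (σ.injective (congrArg Subtype.val hab))
        have hg1bij : Function.Bijective g1 :=
          (Fintype.bijective_iff_injective_and_card g1).mpr ⟨hg1inj, by rw [cardA, cardA']⟩
        have hg2bij : Function.Bijective g2 :=
          (Fintype.bijective_iff_injective_and_card g2).mpr ⟨hg2inj, by rw [cardB, cardB']⟩
        refine ⟨(Equiv.ofBijective g1 hg1bij, Equiv.ofBijective g2 hg2bij), ?_⟩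
        apply Subtype.ext
        apply Equiv.ext
        intro x
        show glueFun z seg P _ _ x = σ x
        unfold glueFun
        by_cases hx : x ∈ seg
        · rw [dif_pos hx]
          by_cases hxz : x = z
          · rw [dif_pos hxz, hxz, hσz]
          · rw [dif_neg hxz]
            rfl
        · rw [dif_neg hx]
          rfl
    exact (Fintype.card_of_bijective hbij).symm
  have hsub : (Finset.univ.filter fun σ : Equiv.Perm (Fin r) =>
      σ z = z ∧ seg.image σ = P).card =
      Fintype.card {σ : Equiv.Perm (Fin r) // σ z = z ∧ seg.image σ = P} :=
    (Fintype.card_subtype _).symm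
  rw [hsub, key, Fintype.card_prod,
    Fintype.card_equiv (Fintype.equivOfCardEq (cardA.trans cardA'.symm)),
    Fintype.card_equiv (Fintype.equivOfCardEq (cardB.trans cardB'.symm)),
    cardA, cardB]

/-- Description of `ℋ_1|Π` for a nontrivial partition with
`1 ∈ Π′`:  it consists of the `H(σ)` with `σ(1) = 1` and `σ({1,…,r′}) = Π′`,
and has `(r′−1)!·r″!` elements. -/
theorem hamiltonian_basis_splitting_along_partition
    (r : ℕ) (hr : 2 ≤ r)
    (P : Finset (Fin r)) (hP : NontrivPart r (by omega) P)
    (h1 : (⟨0, by omega⟩ : Fin r) ∈ P) :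
    (hamSet r (by omega) ⟨0, by omega⟩).filter (fun B => SplitsAlong B P) =
        (Finset.univ.filter fun σ : Equiv.Perm (Fin r) =>
          σ ⟨0, by omega⟩ = (⟨0, by omega⟩ : Fin r) ∧
            (Finset.univ.filter fun i : Fin r => (i : ℕ) < P.card).image σ = P).image
          (ham r) ∧
      ((hamSet r (by omega) ⟨0, by omega⟩).filter (fun B => SplitsAlong B P)).card =
        (P.card - 1).factorial * (Pᶜ.card).factorial := by
  have hc1 : 1 ≤ P.card := Finset.card_pos.mpr hP.1
  have hlast : lastI r (by omega) ∉ P := hP.2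
  have hclt : P.card < r := by
    have hne : P ≠ Finset.univ := fun h => hlast (by rw [h]; exact Finset.mem_univ _)
    have h := Finset.card_lt_card ((Finset.ssubset_univ_iff).mpr hne)
    simpa using h
  have hset : (hamSet r (by omega) ⟨0, by omega⟩).filter (fun B => SplitsAlong B P) =
      (Finset.univ.filter fun σ : Equiv.Perm (Fin r) =>
        σ ⟨0, by omega⟩ = (⟨0, by omega⟩ : Fin r) ∧
          (Finset.univ.filter fun i : Fin r => (i : ℕ) < P.card).image σ = P).image
        (ham r) := by
    ext B
    simp only [hamSet, Finset.mem_filter, Finset.mem_image, Finset.mem_univ, true_and]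
    constructor
    · rintro ⟨⟨σ, hσ0, rfl⟩, hsp⟩
      exact ⟨σ, ⟨hσ0, (splits_iff hr P h1 hlast σ hσ0).mp hsp⟩, rfl⟩
    · rintro ⟨σ, ⟨hσ0, himg⟩, rfl⟩
      exact ⟨⟨σ, hσ0, rfl⟩, (splits_iff hr P h1 hlast σ hσ0).mpr himg⟩
  refine ⟨hset, ?_⟩
  rw [hset, Finset.card_image_of_injective _ (ham_injective hr)]
  have h4 : Pᶜ.card = r - P.card := by rw [Finset.card_compl, Fintype.card_fin]
  rw [h4]
  exact count_perms hr P h1 hc1 hclt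


end Verlinde
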